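/- For n ≥ 7, ex(2n−6;T_n*) = (n−3)², attained by the complete bipartite graph K_{n−3,n−3}. -/

import Mathlib

open SimpleGraph

/-- `G` contains a copy of `H` as a subgraph: there is an injective map
preserving adjacency. -/
def ContainsCopy {V : Type*} {W : Type*} (G : SimpleGraph V) (H : SimpleGraph W) : Prop :=
  ∃ f : W ↪ V, ∀ a b, H.Adj a b → G.Adj (f a) (f b)

/-- `exNum p H` is the maximal number of edges in a simple graph of order `p`
not containing a copy of `H`. -/
noncomputable def exNum (p : ℕ) {W : Type*} (H : SimpleGraph W) : ℕ :=
  sSup {m : ℕ | ∃ G : SimpleGraph (Fin p), ¬ ContainsCopy G H ∧ Nat.card G.edgeSet = m}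

/-- `exNum2 p H₁ H₂` is the maximal number of edges in a simple graph of order `p`
containing no copy of `H₁` and no copy of `H₂`. -/
noncomputable def exNum2 (p : ℕ) {W₁ W₂ : Type*} (H₁ : SimpleGraph W₁) (H₂ : SimpleGraph W₂) : ℕ :=
  sSup {m : ℕ | ∃ G : SimpleGraph (Fin p),
    ¬ ContainsCopy G H₁ ∧ ¬ ContainsCopy G H₂ ∧ Nat.card G.edgeSet = m}

/-- The tree `T_n` on vertices `v_0, …, v_{n-1}` with edges
`v_0v_1, …, v_0v_{n-2}` and `v_{n-2}v_{n-1}`: the unique tree on `n` vertices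
of maximal degree `n-2`. -/
def Tn (n : ℕ) : SimpleGraph (Fin n) :=
  SimpleGraph.fromRel (fun a b =>
    (a.val = 0 ∧ 1 ≤ b.val ∧ b.val ≤ n - 2) ∨ (a.val = n - 2 ∧ b.val = n - 1))

/-- The tree `T_n^*` on vertices `v_0, …, v_{n-1}` with edges
`v_0v_1, …, v_0v_{n-3}`, `v_{n-3}v_{n-2}` and `v_{n-2}v_{n-1}`. -/
def TnStar (n : ℕ) : SimpleGraph (Fin n) :=
  SimpleGraph.fromRel (fun a b =>
    (a.val = 0 ∧ 1 ≤ b.val ∧ b.val ≤ n - 3) ∨ (a.val = n - 3 ∧ b.val = n - 2) ∨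
    (a.val = n - 2 ∧ b.val = n - 1))

section Aux

open Finset

variable {k : ℕ} {G : SimpleGraph (Fin (2*k))} [DecidableRel G.Adj]

private lemma card2' {α : Type*} [DecidableEq α] (a e : α) : ({a,e} : Finset α).card ≤ 2 :=
  le_trans (Finset.card_insert_le _ _) (by simp)

private lemma card3' {α : Type*} [DecidableEq α] (a b e : α) : ({a,b,e} : Finset α).card ≤ 3 :=
  le_trans (Finset.card_insert_le _ _)
    (le_trans (by exact Nat.succ_le_succ (Finset.card_insert_le _ _)) (by simp))

-- no P4 from a vertex of degree ≥ k+2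
private lemma noP4 (hk : 4 ≤ k)
    (hKL : ∀ c a b e : Fin (2*k), G.Adj c a → G.Adj a b → G.Adj b e →
      c ≠ b → c ≠ e → a ≠ e → ((G.neighborFinset c) \ {a,b,e}).card ≤ k - 2)
    {u a b e : Fin (2*k)} (hd : k + 2 ≤ G.degree u)
    (h1 : G.Adj u a) (h2 : G.Adj a b) (h3 : G.Adj b e)
    (n1 : u ≠ b) (n2 : u ≠ e) (n3 : a ≠ e) : False := by
  have h := hKL u a b e h1 h2 h3 n1 n2 n3
  have h' : (G.neighborFinset u).card - 3 ≤ ((G.neighborFinset u) \ {a,b,e}).card :=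
    le_trans (by have := card3' a b e; omega) (Finset.le_card_sdiff _ _)
  rw [← SimpleGraph.card_neighborFinset_eq_degree] at hd
  omega

private lemma P4mem (hk : 4 ≤ k)
    (hKL : ∀ c a b e : Fin (2*k), G.Adj c a → G.Adj a b → G.Adj b e →
      c ≠ b → c ≠ e → a ≠ e → ((G.neighborFinset c) \ {a,b,e}).card ≤ k - 2)
    {u a b e : Fin (2*k)} (hd : G.degree u = k + 1)
    (h1 : G.Adj u a) (h2 : G.Adj a b) (h3 : G.Adj b e)
    (n1 : u ≠ b) (n2 : u ≠ e) (n3 : a ≠ e) :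
    b ∈ G.neighborFinset u ∧ e ∈ G.neighborFinset u := by
  have h := hKL u a b e h1 h2 h3 n1 n2 n3
  rw [← SimpleGraph.card_neighborFinset_eq_degree] at hd
  by_contra hc
  have key : ∃ t : Finset (Fin (2*k)), t.card ≤ 2 ∧
      (G.neighborFinset u) \ {a,b,e} = (G.neighborFinset u) \ t := by
    rcases not_and_or.mp hc with hb | he
    · refine ⟨{a,e}, card2' a e, ?_⟩
      ext x; simp only [Finset.mem_sdiff, Finset.mem_insert, Finset.mem_singleton]
      constructor
      · rintro ⟨hx, hx2⟩; exact ⟨hx, by tauto⟩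
      · rintro ⟨hx, hx2⟩
        refine ⟨hx, ?_⟩
        rintro (rfl | rfl | rfl) <;> tauto
    · refine ⟨{a,b}, card2' a b, ?_⟩
      ext x; simp only [Finset.mem_sdiff, Finset.mem_insert, Finset.mem_singleton]
      constructor
      · rintro ⟨hx, hx2⟩; exact ⟨hx, by tauto⟩
      · rintro ⟨hx, hx2⟩
        refine ⟨hx, ?_⟩
        rintro (rfl | rfl | rfl) <;> tauto
  obtain ⟨t, ht, heq⟩ := key
  rw [heq] at h
  have h' : (G.neighborFinset u).card - t.card ≤ ((G.neighborFinset u) \ t).card :=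
    Finset.le_card_sdiff _ _
  omega

private lemma sum_cross (A B : Finset (Fin (2*k))) :
    ∑ a ∈ A, ((G.neighborFinset a) ∩ B).card = ∑ y ∈ B, ((G.neighborFinset y) ∩ A).card := by
  have h : ∀ (s t : Finset (Fin (2*k))) (a : Fin (2*k)),
      ((G.neighborFinset a) ∩ t).card = ∑ y ∈ t, if G.Adj a y then 1 else 0 := by
    intro s t a
    rw [← Finset.card_filter]
    congr 1
    ext x
    simp [SimpleGraph.mem_neighborFinset, and_comm]
  calc ∑ a ∈ A, ((G.neighborFinset a) ∩ B).card
      = ∑ a ∈ A, ∑ y ∈ B, if G.Adj a y then 1 else 0 := by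
        exact Finset.sum_congr rfl fun a _ => h A B a
    _ = ∑ y ∈ B, ∑ a ∈ A, if G.Adj a y then 1 else 0 := Finset.sum_comm
    _ = ∑ y ∈ B, ((G.neighborFinset y) ∩ A).card := by
        refine Finset.sum_congr rfl fun y _ => ?_
        rw [h B A y]
        refine Finset.sum_congr rfl fun a _ => ?_
        simp [SimpleGraph.adj_comm]

private lemma case2 (hk : 4 ≤ k)
    (hKL : ∀ c a b e : Fin (2*k), G.Adj c a → G.Adj a b → G.Adj b e →
      c ≠ b → c ≠ e → a ≠ e → ((G.neighborFinset c) \ {a,b,e}).card ≤ k - 2)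
    (hbig : ∃ u, k + 2 ≤ G.degree u) :
    G.edgeFinset.card ≤ k^2 := by
  classical
  obtain ⟨u, hd⟩ := hbig
  set A := G.neighborFinset u with hA
  set B := Finset.univ \ insert u A with hB
  have huA : u ∉ A := by simp [hA]
  have hdA : A.card = G.degree u := G.card_neighborFinset_eq_degree u
  have hmemA : ∀ a, a ∈ A ↔ G.Adj u a := fun a => SimpleGraph.mem_neighborFinset G u a
  have hmemB : ∀ y, y ∈ B ↔ (y ≠ u ∧ y ∉ A) := by
    intro y; simp [hB, not_or]
  have hBcard : B.card + (G.degree u + 1) = 2*k := by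
    rw [hB, Finset.card_sdiff_of_subset (Finset.subset_univ _)]
    have h1 : (insert u A).card = G.degree u + 1 := by
      rw [Finset.card_insert_of_notMem huA, hdA]
    have h2 : (Finset.univ : Finset (Fin (2*k))).card = 2*k := by simp
    have h3 : G.degree u < 2*k := by
      have := G.degree_lt_card_verts u; simpa using this
    omega
  -- structural fact: second neighborhoods are tiny
  have noAu : ∀ a ∈ A, ∀ b, G.Adj a b → b ≠ u → G.neighborFinset b ⊆ {u, a} := by
    intro a ha b hab hbu t ht
    rw [SimpleGraph.mem_neighborFinset] at ht
    simp only [Finset.mem_insert, Finset.mem_singleton]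
    by_contra hc
    push_neg at hc
    exact noP4 hk hKL hd ((hmemA a).mp ha) hab ht (Ne.symm hbu) (Ne.symm hc.1) (Ne.symm hc.2)
  -- bound on |N a ∩ A| for a ∈ A
  have degAA : ∀ a ∈ A, ((G.neighborFinset a) ∩ A).card ≤ 1 := by
    intro a ha
    by_cases h : ((G.neighborFinset a) ∩ A).Nonempty
    · obtain ⟨b, hb⟩ := h
      rw [Finset.mem_inter, SimpleGraph.mem_neighborFinset] at hb
      have hsub : (G.neighborFinset a) ∩ A ⊆ {b} := by
        intro t ht
        rw [Finset.mem_inter, SimpleGraph.mem_neighborFinset] at ht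
        have := noAu b hb.2 a (G.adj_symm hb.1) (fun h => huA (h ▸ ha))
        have ht' := this ((SimpleGraph.mem_neighborFinset G a t).mpr ht.1)
        simp only [Finset.mem_insert, Finset.mem_singleton] at ht'
        rcases ht' with rfl | rfl
        · exact absurd ht.2 huA
        · simp
      calc ((G.neighborFinset a) ∩ A).card ≤ ({b} : Finset _).card := Finset.card_le_card hsub
        _ = 1 := Finset.card_singleton b
    · rw [Finset.not_nonempty_iff_eq_empty] at h; rw [h]; simp
  -- every B vertex adjacent to A is a pendant
  have degB : ∀ y ∈ B, G.degree y ≤ max (B.card - 1) 1 := by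
    intro y hy
    rw [hmemB] at hy
    have hyu : ¬ G.Adj y u := fun h => hy.2 ((hmemA y).mpr (G.adj_symm h))
    by_cases h : ∃ x ∈ A, G.Adj y x
    · obtain ⟨x, hxA, hyx⟩ := h
      have hsub : G.neighborFinset y ⊆ {x} := by
        intro t ht
        have := noAu x hxA y (G.adj_symm hyx) hy.1 ht
        simp only [Finset.mem_insert, Finset.mem_singleton] at this ⊢
        rcases this with rfl | rfl
        · exact absurd ((SimpleGraph.mem_neighborFinset G y t).mp ht) hyu
        · rfl
      have : G.degree y ≤ 1 := by
        rw [← SimpleGraph.card_neighborFinset_eq_degree]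
        calc (G.neighborFinset y).card ≤ ({x} : Finset _).card := Finset.card_le_card hsub
          _ = 1 := Finset.card_singleton x
      omega
    · push_neg at h
      have hsub : G.neighborFinset y ⊆ B.erase y := by
        intro t ht
        rw [SimpleGraph.mem_neighborFinset] at ht
        rw [Finset.mem_erase, hmemB]
        refine ⟨fun hty => G.irrefl (hty ▸ ht), fun htu => hyu (htu ▸ ht), fun htA => h t htA ht⟩
      have : G.degree y ≤ B.card - 1 := by
        rw [← SimpleGraph.card_neighborFinset_eq_degree]
        calc (G.neighborFinset y).card ≤ (B.erase y).card := Finset.card_le_card hsub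
          _ = B.card - 1 := Finset.card_erase_of_mem (by rw [hmemB]; exact hy)
      omega
  -- bound on |N y ∩ A| for y ∈ B
  have degBA : ∀ y ∈ B, ((G.neighborFinset y) ∩ A).card ≤ 1 := by
    intro y hy
    rw [hmemB] at hy
    by_cases h : ((G.neighborFinset y) ∩ A).Nonempty
    · obtain ⟨x, hx⟩ := h
      rw [Finset.mem_inter, SimpleGraph.mem_neighborFinset] at hx
      have hsub : (G.neighborFinset y) ∩ A ⊆ {x} := by
        intro t ht
        rw [Finset.mem_inter] at ht
        have := noAu x hx.2 y (G.adj_symm hx.1) hy.1 ht.1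
        simp only [Finset.mem_insert, Finset.mem_singleton] at this ⊢
        rcases this with rfl | rfl
        · exact absurd ht.2 huA
        · rfl
      calc ((G.neighborFinset y) ∩ A).card ≤ ({x} : Finset _).card := Finset.card_le_card hsub
        _ = 1 := Finset.card_singleton x
    · rw [Finset.not_nonempty_iff_eq_empty] at h; rw [h]; simp
  -- degree bound for a ∈ A
  have degA : ∀ a ∈ A, G.degree a ≤ 1 + ((G.neighborFinset a) ∩ A).card
      + ((G.neighborFinset a) ∩ B).card := by
    intro a ha
    rw [← SimpleGraph.card_neighborFinset_eq_degree]
    have hsub : G.neighborFinset a ⊆ {u} ∪ ((G.neighborFinset a) ∩ A)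
        ∪ ((G.neighborFinset a) ∩ B) := by
      intro t ht
      simp only [Finset.mem_union, Finset.mem_singleton, Finset.mem_inter]
      by_cases h1 : t = u
      · tauto
      · by_cases h2 : t ∈ A
        · tauto
        · exact Or.inr ⟨ht, (hmemB t).mpr ⟨h1, h2⟩⟩
    calc (G.neighborFinset a).card
        ≤ (({u} : Finset _) ∪ ((G.neighborFinset a) ∩ A) ∪ ((G.neighborFinset a) ∩ B)).card :=
          Finset.card_le_card hsub
      _ ≤ (({u} : Finset _) ∪ ((G.neighborFinset a) ∩ A)).card
          + ((G.neighborFinset a) ∩ B).card := Finset.card_union_le _ _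
      _ ≤ ({u} : Finset _).card + ((G.neighborFinset a) ∩ A).card
          + ((G.neighborFinset a) ∩ B).card := by
            have := Finset.card_union_le ({u} : Finset (Fin (2*k))) ((G.neighborFinset a) ∩ A)
            omega
      _ = 1 + ((G.neighborFinset a) ∩ A).card + ((G.neighborFinset a) ∩ B).card := by simp
  -- assemble via degree-sum formula
  have hsplit : ∑ v ∈ B, G.degree v + ∑ v ∈ insert u A, G.degree v = ∑ v, G.degree v :=
    Finset.sum_sdiff (Finset.subset_univ _)
  have hsum : ∑ v, G.degree v = 2 * G.edgeFinset.card := G.sum_degrees_eq_twice_card_edges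
  have hsumA : ∑ a ∈ A, G.degree a ≤ A.card + A.card + B.card := by
    calc ∑ a ∈ A, G.degree a
        ≤ ∑ a ∈ A, (1 + ((G.neighborFinset a) ∩ A).card + ((G.neighborFinset a) ∩ B).card) :=
          Finset.sum_le_sum degA
      _ = A.card + (∑ a ∈ A, ((G.neighborFinset a) ∩ A).card)
          + ∑ a ∈ A, ((G.neighborFinset a) ∩ B).card := by
            rw [Finset.sum_add_distrib, Finset.sum_add_distrib, Finset.sum_const, smul_eq_mul, mul_one]
      _ ≤ A.card + A.card + ∑ a ∈ A, ((G.neighborFinset a) ∩ B).card := by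
            have h1 : ∑ a ∈ A, ((G.neighborFinset a) ∩ A).card ≤ ∑ _a ∈ A, 1 :=
              Finset.sum_le_sum degAA
            simp only [Finset.sum_const, smul_eq_mul, mul_one] at h1
            omega
      _ = A.card + A.card + ∑ y ∈ B, ((G.neighborFinset y) ∩ A).card := by rw [sum_cross]
      _ ≤ A.card + A.card + B.card := by
            have h1 : ∑ y ∈ B, ((G.neighborFinset y) ∩ A).card ≤ ∑ _y ∈ B, 1 :=
              Finset.sum_le_sum degBA
            simp only [Finset.sum_const, smul_eq_mul, mul_one] at h1
            omega
  have hsumB : ∑ y ∈ B, G.degree y ≤ B.card * max (B.card - 1) 1 := by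
    calc ∑ y ∈ B, G.degree y ≤ ∑ _y ∈ B, max (B.card - 1) 1 := Finset.sum_le_sum degB
      _ = B.card * max (B.card - 1) 1 := by rw [Finset.sum_const, smul_eq_mul]
  -- final arithmetic
  have hins : ∑ v ∈ insert u A, G.degree v = G.degree u + ∑ a ∈ A, G.degree a :=
    Finset.sum_insert huA
  set d := G.degree u with hdd
  set m := B.card with hmm
  have hmk : m + 3 ≤ k := by omega
  have hmax : m * max (m - 1) 1 ≤ m * m := by
    rcases Nat.eq_zero_or_pos m with h | h
    · simp [h]
    · exact Nat.mul_le_mul_left m (by omega)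
  have htot : 2 * G.edgeFinset.card ≤ 3 * d + m + m * m := by
    have := hsplit
    rw [hsum, hins] at this
    have hAc : A.card = d := hdA
    omega
  obtain ⟨j, rfl⟩ : ∃ j, k = j + 4 := ⟨k - 4, by omega⟩
  have hm : m ≤ j + 1 := by omega
  have hd' : d ≤ 2*(j+4) - 1 := by omega
  have hmm2 : m * m ≤ (j+1) * (j+1) := Nat.mul_le_mul hm hm
  nlinarith [htot, hmm2, hd']

private lemma case3 (hk : 4 ≤ k)
    (hKL : ∀ c a b e : Fin (2*k), G.Adj c a → G.Adj a b → G.Adj b e →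
      c ≠ b → c ≠ e → a ≠ e → ((G.neighborFinset c) \ {a,b,e}).card ≤ k - 2)
    (hsmall : ∀ v, G.degree v ≤ k + 1) :
    G.edgeFinset.card ≤ k^2 := by
  classical
  by_contra hcon
  push_neg at hcon
  have hsum : ∑ v, G.degree v = 2 * G.edgeFinset.card := G.sum_degrees_eq_twice_card_edges
  have hkk : k^2 = k*k := sq k
  -- there are two vertices of degree k+1
  set Big := Finset.univ.filter (fun v : Fin (2*k) => G.degree v = k+1) with hBigdef
  have hBig : 1 < Big.card := by
    by_contra hB
    push_neg at hB
    have hle : ∑ v, G.degree v ≤ ∑ v : Fin (2*k), (k + if G.degree v = k+1 then 1 else 0) := by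
      refine Finset.sum_le_sum fun v _ => ?_
      by_cases h : G.degree v = k+1
      · simp [h]
      · have := hsmall v; simp [h]; omega
    have heq : ∑ v : Fin (2*k), (k + if G.degree v = k+1 then 1 else 0)
        = 2*k*k + Big.card := by
      rw [Finset.sum_add_distrib, Finset.sum_const, smul_eq_mul, hBigdef]
      rw [Finset.card_filter]
      simp
    rw [hsum, heq] at hle
    have hring : 2*k*k = 2*(k*k) := by ring
    omega
  obtain ⟨u, hu, w, hw, huw⟩ := Finset.one_lt_card.mp hBig
  rw [hBigdef, Finset.mem_filter] at hu hw
  have hdu : G.degree u = k + 1 := hu.2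
  have hdw : G.degree w = k + 1 := hw.2
  set A := G.neighborFinset u with hA
  set B := Finset.univ \ insert u A with hB
  have huA : u ∉ A := by simp [hA]
  have hdA : A.card = k + 1 := by rw [hA, G.card_neighborFinset_eq_degree u, hdu]
  have hmemA : ∀ a, a ∈ A ↔ G.Adj u a := fun a => SimpleGraph.mem_neighborFinset G u a
  have hmemB : ∀ y, y ∈ B ↔ (y ≠ u ∧ y ∉ A) := by
    intro y; simp [hB, not_or]
  have hBcard : B.card + (k + 2) = 2*k := by
    rw [hB, Finset.card_sdiff_of_subset (Finset.subset_univ _)]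
    have h1 : (insert u A).card = k + 2 := by
      rw [Finset.card_insert_of_notMem huA, hdA]
    have h2 : (Finset.univ : Finset (Fin (2*k))).card = 2*k := by simp
    have h3 : (insert u A).card ≤ 2*k := le_trans (Finset.card_le_card (Finset.subset_univ _)) (by simp)
    omega
  have key : ∀ p q r : Fin (2*k), G.Adj u p → G.Adj p q → G.Adj q r → u ≠ q → u ≠ r →
      p ≠ r → q ∈ A ∧ r ∈ A := fun p q r h1 h2 h3 n1 n2 n3 =>
    P4mem hk hKL hdu h1 h2 h3 n1 n2 n3
  -- w is a neighbor of u
  have hwA : w ∈ A := by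
    by_contra hwA'
    have hwu : ∀ t, G.Adj w t → t ≠ u := by
      intro t ht htu
      exact hwA' ((hmemA w).mpr (G.adj_symm (htu ▸ ht)))
    by_cases hex : ∃ x ∈ A, G.Adj w x
    · obtain ⟨x, hxA, hwx⟩ := hex
      have hne : ((G.neighborFinset w) \ {u, x}).Nonempty := by
        rw [← Finset.card_pos]
        have h1 : (G.neighborFinset w).card = k+1 := by
          rw [G.card_neighborFinset_eq_degree w, hdw]
        have h2 : ({u, x} : Finset (Fin (2*k))).card ≤ 2 :=
          le_trans (Finset.card_insert_le _ _) (by simp)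
        have := Finset.le_card_sdiff ({u, x} : Finset (Fin (2*k))) (G.neighborFinset w)
        omega
      obtain ⟨t, ht⟩ := hne
      rw [Finset.mem_sdiff, SimpleGraph.mem_neighborFinset] at ht
      simp only [Finset.mem_insert, Finset.mem_singleton, not_or] at ht
      have := key x w t ((hmemA x).mp hxA) (G.adj_symm hwx) ht.1 huw (Ne.symm ht.2.1) (fun h => ht.2.2 h.symm)
      exact hwA' this.1
    · push_neg at hex
      have hsub : G.neighborFinset w ⊆ B.erase w := by
        intro t ht
        rw [SimpleGraph.mem_neighborFinset] at ht
        rw [Finset.mem_erase, hmemB]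
        exact ⟨fun h => G.irrefl (h ▸ ht), hwu t ht, fun h => hex t h ht⟩
      have h1 : (G.neighborFinset w).card = k+1 := by
        rw [G.card_neighborFinset_eq_degree w, hdw]
      have h2 := Finset.card_le_card hsub
      have h3 : (B.erase w).card ≤ B.card := Finset.card_erase_le
      omega
  -- w has no neighbors in B
  have hwNB : ∀ z ∈ B, ¬ G.Adj w z := by
    intro z hz hadj
    have hzB := (hmemB z).mp hz
    by_cases hex : ∃ x ∈ A, x ≠ w ∧ G.Adj w x
    · obtain ⟨x, hxA, hxw, hwx⟩ := hex
      have := key x w z ((hmemA x).mp hxA) (G.adj_symm hwx) hadj huw hzB.1.symm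
        (fun h => hzB.2 (h ▸ hxA))
      exact hzB.2 this.2
    · push_neg at hex
      have hsub : G.neighborFinset w ⊆ insert u B := by
        intro t ht
        rw [SimpleGraph.mem_neighborFinset] at ht
        simp only [Finset.mem_insert]
        by_cases h1 : t = u
        · exact Or.inl h1
        · right
          rw [hmemB]
          refine ⟨h1, fun htA => ?_⟩
          exact hex t htA (fun h => G.irrefl (h ▸ ht)) ht
      have h1 : (G.neighborFinset w).card = k+1 := by
        rw [G.card_neighborFinset_eq_degree w, hdw]
      have h2 := Finset.card_le_card hsub
      have h3 : (insert u B).card ≤ B.card + 1 := Finset.card_insert_le _ _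
      omega
  -- w is adjacent to all other members of A
  have hNw : ∀ x ∈ A, x ≠ w → G.Adj w x := by
    have hsub : G.neighborFinset w ⊆ insert u (A.erase w) := by
      intro t ht
      have htw : t ≠ w := fun h => G.irrefl (h ▸ (SimpleGraph.mem_neighborFinset G w t).mp ht)
      rw [SimpleGraph.mem_neighborFinset] at ht
      have htB : t ∉ B := fun h => hwNB t h ht
      simp only [Finset.mem_insert, Finset.mem_erase]
      by_cases h1 : t = u
      · exact Or.inl h1
      · right
        refine ⟨htw, ?_⟩
        by_contra htA
        exact htB ((hmemB t).mpr ⟨h1, htA⟩)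
    have hcw : (insert u (A.erase w)).card = k + 1 := by
      rw [Finset.card_insert_of_notMem (fun h => huA (Finset.mem_of_mem_erase h)),
        Finset.card_erase_of_mem hwA, hdA]
      omega
    have h1 : (G.neighborFinset w).card = k+1 := by
      rw [G.card_neighborFinset_eq_degree w, hdw]
    have heq : G.neighborFinset w = insert u (A.erase w) :=
      Finset.eq_of_subset_of_card_le hsub (by omega)
    intro x hxA hxw
    have : x ∈ G.neighborFinset w := by
      rw [heq]
      simp only [Finset.mem_insert, Finset.mem_erase]
      exact Or.inr ⟨hxw, hxA⟩
    exact (SimpleGraph.mem_neighborFinset G w x).mp this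
  -- B is separated from insert u A
  have hsep : ∀ y ∈ B, ∀ t, G.Adj y t → t ∈ B := by
    intro y hy t hadj
    have hyB := (hmemB y).mp hy
    by_contra htB
    have ht' : t = u ∨ t ∈ A := by
      by_contra h
      push_neg at h
      exact htB ((hmemB t).mpr h)
    rcases ht' with rfl | htA
    · exact hyB.2 ((hmemA y).mpr (G.adj_symm hadj))
    · by_cases htw : t = w
      · exact hwNB y hy (G.adj_symm (htw ▸ hadj))
      · have hwt : G.Adj w t := hNw t htA htw
        have := key w t y ((hmemA w).mp hwA) hwt (G.adj_symm hadj)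
          (fun h => huA (h ▸ htA)) hyB.1.symm (fun h => hyB.2 (h ▸ hwA) )
        exact hyB.2 this.2
  -- degree bounds and final count
  have degB : ∀ y ∈ B, G.degree y ≤ B.card - 1 := by
    intro y hy
    rw [← SimpleGraph.card_neighborFinset_eq_degree]
    have hsub : G.neighborFinset y ⊆ B.erase y := by
      intro t ht
      rw [SimpleGraph.mem_neighborFinset] at ht
      rw [Finset.mem_erase]
      exact ⟨fun h => G.irrefl (h ▸ ht), hsep y hy t ht⟩
    calc (G.neighborFinset y).card ≤ (B.erase y).card := Finset.card_le_card hsub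
      _ = B.card - 1 := Finset.card_erase_of_mem hy
  have hsplit : ∑ v ∈ B, G.degree v + ∑ v ∈ insert u A, G.degree v = ∑ v, G.degree v :=
    Finset.sum_sdiff (Finset.subset_univ _)
  have hsumB : ∑ y ∈ B, G.degree y ≤ B.card * (B.card - 1) := by
    calc ∑ y ∈ B, G.degree y ≤ ∑ _y ∈ B, (B.card - 1) := Finset.sum_le_sum degB
      _ = B.card * (B.card - 1) := by rw [Finset.sum_const, smul_eq_mul]
  have hsumC : ∑ v ∈ insert u A, G.degree v ≤ (k+2) * (k+1) := by
    calc ∑ v ∈ insert u A, G.degree v ≤ ∑ _v ∈ insert u A, (k+1) :=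
        Finset.sum_le_sum (fun v _ => hsmall v)
      _ = (k+2) * (k+1) := by
          rw [Finset.sum_const, smul_eq_mul, Finset.card_insert_of_notMem huA, hdA]
  obtain ⟨j, rfl⟩ : ∃ j, k = j + 4 := ⟨k - 4, by omega⟩
  have hBc : B.card = j + 2 := by omega
  rw [hBc] at hsumB
  have e1 : (j + 2) - 1 = j + 1 := by omega
  rw [e1] at hsumB
  have hsumC' : ∑ v ∈ insert u A, G.degree v ≤ (j+6) * (j+5) := by
    calc ∑ v ∈ insert u A, G.degree v ≤ (j+4+2) * (j+4+1) := hsumC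
      _ = (j+6) * (j+5) := by ring
  have h2E : 2 * ((j+4)^2 + 1) ≤ 2 * G.edgeFinset.card := by omega
  rw [← hsum, ← hsplit] at h2E
  have hfin : 2 * ((j+4)^2 + 1) ≤ (j+2) * (j+1) + (j+6) * (j+5) := by omega
  nlinarith [hfin]

private lemma upperBound (hk : 4 ≤ k)
    (hKL : ∀ c a b e : Fin (2*k), G.Adj c a → G.Adj a b → G.Adj b e →
      c ≠ b → c ≠ e → a ≠ e → ((G.neighborFinset c) \ {a,b,e}).card ≤ k - 2) :
    G.edgeFinset.card ≤ k^2 := by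
  by_cases hbig : ∃ u, k + 2 ≤ G.degree u
  · exact case2 hk hKL hbig
  · push_neg at hbig
    exact case3 hk hKL (fun v => by have := hbig v; omega)

private lemma freeKL (n : ℕ) (hn : 7 ≤ n) (G : SimpleGraph (Fin (2*(n-3)))) [DecidableRel G.Adj]
    (hfree : ¬ ContainsCopy G (TnStar n)) :
    ∀ c a b e : Fin (2*(n-3)), G.Adj c a → G.Adj a b → G.Adj b e →
      c ≠ b → c ≠ e → a ≠ e →
      ((G.neighborFinset c) \ {a,b,e}).card ≤ (n-3) - 2 := by
  intro c a b e h1 h2 h3 ncb nce nae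
  by_contra hcard
  push_neg at hcard
  have hcard' : n - 4 ≤ ((G.neighborFinset c) \ {a,b,e}).card := by omega
  obtain ⟨T, hTsub, hTcard⟩ := Finset.exists_subset_card_eq hcard'
  have hTN : ∀ x ∈ T, G.Adj c x := by
    intro x hx
    have := hTsub hx
    rw [Finset.mem_sdiff, SimpleGraph.mem_neighborFinset] at this
    exact this.1
  have hTne : ∀ x ∈ T, x ≠ c ∧ x ≠ a ∧ x ≠ b ∧ x ≠ e := by
    intro x hx
    have h := hTsub hx
    rw [Finset.mem_sdiff] at h
    simp only [Finset.mem_insert, Finset.mem_singleton, not_or] at h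
    exact ⟨fun hxc => G.irrefl (hxc ▸ hTN x hx), h.2.1, h.2.2.1, h.2.2.2⟩
  have hn4 : 0 < n - 4 := by omega
  set σ := T.orderIsoOfFin hTcard with hσ
  set g : ℕ → Fin (2*(n-3)) := fun m => (σ ⟨m % (n-4), Nat.mod_lt m hn4⟩ : _) with hg
  have hmemg : ∀ m, g m ∈ T := fun m => (σ _).2
  have hginj : ∀ m m', m < n - 4 → m' < n - 4 → g m = g m' → m = m' := by
    intro m m' hm hm' hgg
    rw [hg] at hgg
    have := σ.injective (Subtype.coe_injective hgg)
    simp only [Fin.mk.injEq] at this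
    rw [Nat.mod_eq_of_lt hm, Nat.mod_eq_of_lt hm'] at this
    exact this
  -- the embedding
  set f : Fin n → Fin (2*(n-3)) := fun i =>
    if i.val = 0 then c
    else if i.val = n-3 then a
    else if i.val = n-2 then b
    else if i.val = n-1 then e
    else g (i.val - 1) with hf
  have hca : c ≠ a := G.ne_of_adj h1
  have hab : a ≠ b := G.ne_of_adj h2
  have hbe : b ≠ e := G.ne_of_adj h3
  have hgc : ∀ m, g m ≠ c := fun m => (hTne _ (hmemg m)).1
  have hga : ∀ m, g m ≠ a := fun m => (hTne _ (hmemg m)).2.1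
  have hgb : ∀ m, g m ≠ b := fun m => (hTne _ (hmemg m)).2.2.1
  have hge : ∀ m, g m ≠ e := fun m => (hTne _ (hmemg m)).2.2.2
  have finj : Function.Injective f := by
    intro i j hij
    have hi := i.isLt
    have hj := j.isLt
    simp only [hf] at hij
    split_ifs at hij with g1 g2 g3 g4 g5 g6 g7 g8 g9 g10 g11 g12 g13 g14 g15 g16 g17 g18 g19 g20
    all_goals try (apply Fin.ext; omega)
    all_goals try (exact absurd hij hca)
    all_goals try (exact absurd hij hca.symm)
    all_goals try (exact absurd hij hab)
    all_goals try (exact absurd hij hab.symm)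
    all_goals try (exact absurd hij hbe)
    all_goals try (exact absurd hij hbe.symm)
    all_goals try (exact absurd hij ncb)
    all_goals try (exact absurd hij ncb.symm)
    all_goals try (exact absurd hij nce)
    all_goals try (exact absurd hij nce.symm)
    all_goals try (exact absurd hij nae)
    all_goals try (exact absurd hij nae.symm)
    all_goals try (exact absurd hij (hgc _))
    all_goals try (exact absurd hij.symm (hgc _))
    all_goals try (exact absurd hij (hga _))
    all_goals try (exact absurd hij.symm (hga _))
    all_goals try (exact absurd hij (hgb _))
    all_goals try (exact absurd hij.symm (hgb _))
    all_goals try (exact absurd hij (hge _))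
    all_goals try (exact absurd hij.symm (hge _))
    all_goals
      apply Fin.ext
    all_goals
      have hval := hginj (i.val - 1) (j.val - 1) (by omega) (by omega) hij
    all_goals omega
  -- adjacency preservation
  have hstep : ∀ x y : Fin n,
      ((x.val = 0 ∧ 1 ≤ y.val ∧ y.val ≤ n - 3) ∨ (x.val = n - 3 ∧ y.val = n - 2) ∨
        (x.val = n - 2 ∧ y.val = n - 1)) → G.Adj (f x) (f y) := by
    rintro x y (⟨hx0, hy1, hy2⟩ | ⟨hx, hy⟩ | ⟨hx, hy⟩)
    · have hfx : f x = c := by simp only [hf]; rw [if_pos hx0]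
      rw [hfx]
      by_cases hy3 : y.val = n-3
      · have hfy : f y = a := by
          simp only [hf]; rw [if_neg (by omega), if_pos hy3]
        rw [hfy]; exact h1
      · have hfy : f y = g (y.val - 1) := by
          simp only [hf]
          rw [if_neg (by omega), if_neg hy3, if_neg (by omega), if_neg (by omega)]
        rw [hfy]
        exact hTN _ (hmemg _)
    · have hfx : f x = a := by simp only [hf]; rw [if_neg (by omega), if_pos hx]
      have hfy : f y = b := by
        simp only [hf]; rw [if_neg (by omega), if_neg (by omega), if_pos hy]
      rw [hfx, hfy]; exact h2
    · have hfx : f x = b := by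
        simp only [hf]; rw [if_neg (by omega), if_neg (by omega), if_pos hx]
      have hfy : f y = e := by
        simp only [hf]
        rw [if_neg (by omega), if_neg (by omega), if_neg (by omega), if_pos hy]
      rw [hfx, hfy]; exact h3
  apply hfree
  refine ⟨⟨f, finj⟩, ?_⟩
  intro x y hxy
  rw [TnStar, SimpleGraph.fromRel_adj] at hxy
  obtain ⟨-, h | h⟩ := hxy
  · exact hstep x y h
  · exact G.adj_symm (hstep y x h)

instance (k : ℕ) : DecidableRel (completeBipartiteGraph (Fin k) (Fin k)).Adj := by
  intro a b
  unfold completeBipartiteGraph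
  infer_instance

private lemma sideCard (k : ℕ) (bb : Bool) :
    (Finset.univ.filter (fun x : Fin k ⊕ Fin k => x.isLeft = bb)).card = k := by
  cases bb
  · have h : (Finset.univ.filter (fun x : Fin k ⊕ Fin k => x.isLeft = false))
        = Finset.univ.image Sum.inr := by
      ext x
      cases x <;> simp
    rw [h, Finset.card_image_of_injective _ Sum.inr_injective]
    simp
  · have h : (Finset.univ.filter (fun x : Fin k ⊕ Fin k => x.isLeft = true))
        = Finset.univ.image Sum.inl := by
      ext x
      cases x <;> simp
    rw [h, Finset.card_image_of_injective _ Sum.inl_injective]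
    simp

private lemma bipFree (n : ℕ) (hn : 7 ≤ n) :
    ¬ ContainsCopy (completeBipartiteGraph (Fin (n-3)) (Fin (n-3))) (TnStar n) := by
  rintro ⟨f, hf⟩
  have hside : ∀ x y : Fin (n-3) ⊕ Fin (n-3),
      (completeBipartiteGraph (Fin (n-3)) (Fin (n-3))).Adj x y → x.isLeft = !y.isLeft := by
    intro x y h
    have h' : (x.isLeft ∧ y.isRight) ∨ (x.isRight ∧ y.isLeft) := h
    cases x <;> cases y <;> simp_all
  obtain ⟨w0, hw0⟩ : ∃ w : Fin n, w.val = 0 := ⟨⟨0, by omega⟩, rfl⟩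
  obtain ⟨w3, hw3⟩ : ∃ w : Fin n, w.val = n - 3 := ⟨⟨n-3, by omega⟩, rfl⟩
  obtain ⟨w2, hw2⟩ : ∃ w : Fin n, w.val = n - 2 := ⟨⟨n-2, by omega⟩, rfl⟩
  obtain ⟨w1, hw1⟩ : ∃ w : Fin n, w.val = n - 1 := ⟨⟨n-1, by omega⟩, rfl⟩
  have hadj0 : ∀ (j : Fin n), 1 ≤ j.val → j.val ≤ n - 3 → (TnStar n).Adj w0 j := by
    intro j hj1 hj2
    rw [TnStar, SimpleGraph.fromRel_adj]
    refine ⟨fun hc => by rw [Fin.ext_iff] at hc; omega, Or.inl (Or.inl ⟨hw0, hj1, hj2⟩)⟩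
  have hadj1 : (TnStar n).Adj w3 w2 := by
    rw [TnStar, SimpleGraph.fromRel_adj]
    refine ⟨fun hc => by rw [Fin.ext_iff] at hc; omega, Or.inl (Or.inr (Or.inl ⟨hw3, hw2⟩))⟩
  have hadj2 : (TnStar n).Adj w2 w1 := by
    rw [TnStar, SimpleGraph.fromRel_adj]
    refine ⟨fun hc => by rw [Fin.ext_iff] at hc; omega, Or.inl (Or.inr (Or.inr ⟨hw2, hw1⟩))⟩
  obtain ⟨s0, hs0⟩ : ∃ b : Bool, (f w0).isLeft = b := ⟨_, rfl⟩
  have hLcard : (Finset.univ.filter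
      (fun x : Fin (n-3) ⊕ Fin (n-3) => x.isLeft = !s0)).card = n - 3 := sideCard (n-3) (!s0)
  set S : Finset (Fin n) := insert w1
    (Finset.univ.image (fun j : Fin (n-3) => (⟨j.val+1, by omega⟩ : Fin n))) with hS
  have hScard : S.card = n - 2 := by
    rw [hS, Finset.card_insert_of_notMem, Finset.card_image_of_injective,
      Finset.card_univ, Fintype.card_fin]
    · omega
    · intro a b hab
      simp only [Fin.mk.injEq] at hab
      exact Fin.ext (by omega)
    · simp only [Finset.mem_image, Fin.ext_iff, Fin.val_mk]
      rintro ⟨j, -, hj⟩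
      have := j.isLt
      omega
  have hgen : ∀ i : Fin n, 1 ≤ i.val → i.val ≤ n - 3 → (f i).isLeft = !s0 := by
    intro i h1 h2
    have h := hside _ _ (hf _ _ (hadj0 i h1 h2))
    rw [hs0.symm.trans h, Bool.not_not]
  have hmaps : ∀ i ∈ S, f i ∈ Finset.univ.filter
      (fun x : Fin (n-3) ⊕ Fin (n-3) => x.isLeft = !s0) := by
    intro i hi
    rw [hS, Finset.mem_insert] at hi
    rw [Finset.mem_filter]
    refine ⟨Finset.mem_univ _, ?_⟩
    rcases hi with rfl | hi
    · have h1 : (f w3).isLeft = !s0 := hgen w3 (by omega) (by omega)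
      have hB := hside _ _ (hf _ _ hadj1)
      have hC := hside _ _ (hf _ _ hadj2)
      rw [← h1, hB, hC]
      simp
    · obtain ⟨j, -, rfl⟩ := Finset.mem_image.mp hi
      exact hgen _ (by simp) (by
        simp only [Fin.val_mk]
        have := j.isLt
        omega)
  have hcard := Finset.card_le_card_of_injOn (fun i => f i) hmaps
    (fun x _ y _ h => f.injective h)
  rw [hScard, hLcard] at hcard
  omega

private lemma bipDeg (k : ℕ) (x : Fin k ⊕ Fin k) :
    (completeBipartiteGraph (Fin k) (Fin k)).degree x = k := by
  rw [← SimpleGraph.card_neighborFinset_eq_degree]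
  have h : (completeBipartiteGraph (Fin k) (Fin k)).neighborFinset x
      = Finset.univ.filter (fun y : Fin k ⊕ Fin k => y.isLeft = !x.isLeft) := by
    ext y
    rw [SimpleGraph.mem_neighborFinset, Finset.mem_filter]
    cases x <;> cases y <;> simp
  rw [h, sideCard]

private lemma bipEdges (k : ℕ) :
    Nat.card (completeBipartiteGraph (Fin k) (Fin k)).edgeSet = k ^ 2 := by
  set K := completeBipartiteGraph (Fin k) (Fin k) with hK
  have hsum : ∑ v : Fin k ⊕ Fin k, K.degree v = 2 * K.edgeFinset.card :=
    K.sum_degrees_eq_twice_card_edges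
  have hdeg : ∑ v : Fin k ⊕ Fin k, K.degree v = 2 * k * k := by
    rw [Finset.sum_congr rfl (fun v _ => bipDeg k v), Finset.sum_const, smul_eq_mul,
      Finset.card_univ, Fintype.card_sum, Fintype.card_fin]
    ring
  have hE : K.edgeFinset.card = k ^ 2 := by
    have h1 : k ^ 2 = k * k := sq k
    have h2 : 2 * k * k = 2 * (k * k) := Nat.mul_assoc 2 k k
    omega
  rw [← hE]
  rw [Nat.card_coe_set_eq, Set.ncard_eq_toFinset_card']
  congr 1

theorem stmt13 (n : ℕ) (hn : 7 ≤ n) :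
    exNum (2 * n - 6) (TnStar n) = (n - 3) ^ 2 ∧
      ¬ ContainsCopy (completeBipartiteGraph (Fin (n - 3)) (Fin (n - 3))) (TnStar n) ∧
      Nat.card (completeBipartiteGraph (Fin (n - 3)) (Fin (n - 3))).edgeSet = (n - 3) ^ 2 := by
  refine ⟨?_, bipFree n hn, bipEdges (n-3)⟩
  have hp : 2 * n - 6 = 2 * (n - 3) := by omega
  rw [hp]
  -- the transported bipartite graph on `Fin (2*(n-3))`
  set e : Fin (n-3) ⊕ Fin (n-3) ≃ Fin (2*(n-3)) :=
    finSumFinEquiv.trans (finCongr (by omega)) with he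
  set K := completeBipartiteGraph (Fin (n-3)) (Fin (n-3)) with hK
  set G₀ : SimpleGraph (Fin (2*(n-3))) := K.map e.toEmbedding with hG₀
  have hG₀free : ¬ ContainsCopy G₀ (TnStar n) := by
    rintro ⟨f, hf⟩
    refine bipFree n hn ⟨f.trans e.symm.toEmbedding, ?_⟩
    intro a b hab
    have := hf a b hab
    rw [hG₀, SimpleGraph.map_adj] at this
    obtain ⟨u, v, huv, hu, hv⟩ := this
    simp only [Function.Embedding.trans_apply, Equiv.coe_toEmbedding]
    rw [← hu, ← hv]
    simpa [hK] using huv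
  have hG₀card : Nat.card G₀.edgeSet = (n-3)^2 := by
    rw [← bipEdges (n-3)]
    exact (Nat.card_congr ((SimpleGraph.Iso.map e K).mapEdgeSet)).symm
  have hub : ∀ m ∈ {m : ℕ | ∃ G : SimpleGraph (Fin (2*(n-3))),
      ¬ ContainsCopy G (TnStar n) ∧ Nat.card G.edgeSet = m}, m ≤ (n-3)^2 := by
    rintro m ⟨G, hGfree, hGcard⟩
    letI : DecidableRel G.Adj := Classical.decRel _
    have hcard : Nat.card G.edgeSet = G.edgeFinset.card := by
      rw [Nat.card_coe_set_eq, Set.ncard_eq_toFinset_card']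
      congr 1
    rw [hcard] at hGcard
    rw [← hGcard]
    exact upperBound (by omega : 4 ≤ n - 3) (freeKL n hn G hGfree)
  have hmem : (n-3)^2 ∈ {m : ℕ | ∃ G : SimpleGraph (Fin (2*(n-3))),
      ¬ ContainsCopy G (TnStar n) ∧ Nat.card G.edgeSet = m} := ⟨G₀, hG₀free, hG₀card⟩
  apply le_antisymm
  · exact csSup_le ⟨_, hmem⟩ hub
  · exact le_csSup ⟨(n-3)^2, hub⟩ hmem

end Aux
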